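/- Let M be a symmetric positive definite M×M real matrix and let 1 denote the all-ones column vector. Then the maximum of the set of real numbers v such that M - v·11ᵀ is positive semidefinite equals 1/(1ᵀ M⁻¹ 1). -/

import Mathlib

open Matrix

/-- C-SHIFT Proposition 1: for a symmetric positive definite matrix `A`, the maximum `v`
such that `A - v • 11ᵀ` is positive semidefinite equals `1/(1ᵀ A⁻¹ 1)`. -/
theorem cshift_prop_max_shift {M : ℕ} (hM : 0 < M) (A : Matrix (Fin M) (Fin M) ℝ)
    (hA : A.PosDef) :
    IsGreatest {v : ℝ | (A - v • vecMulVec (1 : Fin M → ℝ) 1).PosSemidef}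
      (1 / ((1 : Fin M → ℝ) ⬝ᵥ (A⁻¹ *ᵥ (1 : Fin M → ℝ)))) := by
  have hone : (1 : Fin M → ℝ) ≠ 0 := by
    intro h
    have := congrFun h ⟨0, hM⟩
    simp at this
  set u := A⁻¹ *ᵥ (1 : Fin M → ℝ) with hu_def
  have hAu : A *ᵥ u = 1 := by
    rw [hu_def, mulVec_mulVec, Matrix.mul_nonsing_inv _ (isUnit_iff_ne_zero.mpr hA.det_pos.ne'),
      one_mulVec]
  set c := (1 : Fin M → ℝ) ⬝ᵥ u with hc_def
  have hc : 0 < c := by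
    have := hA.inv.dotProduct_mulVec_pos hone
    simpa [hc_def, hu_def] using this
  -- symmetry helper
  have hsym : ∀ x y : Fin M → ℝ, x ⬝ᵥ (A *ᵥ y) = y ⬝ᵥ (A *ᵥ x) := by
    intro x y
    have hAij : ∀ i j, A i j = A j i := fun i j => (hA.isHermitian.apply i j).symm ▸ rfl
    simp only [dotProduct, mulVec, dotProduct, Finset.mul_sum]
    rw [Finset.sum_comm]
    refine Finset.sum_congr rfl fun j _ => Finset.sum_congr rfl fun i _ => ?_
    rw [hAij i j]; ring
  -- key inequality
  have key : ∀ x : Fin M → ℝ, ((1 : Fin M → ℝ) ⬝ᵥ x)^2 ≤ c * (x ⬝ᵥ (A *ᵥ x)) := by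
    intro x
    set t := (1 : Fin M → ℝ) ⬝ᵥ x with ht
    have h0 := hA.posSemidef.dotProduct_mulVec_nonneg (c • x - t • u)
    rw [star_trivial] at h0
    have hux : u ⬝ᵥ (A *ᵥ x) = t := by rw [hsym, hAu]; exact dotProduct_comm _ _
    have hxu : x ⬝ᵥ (A *ᵥ u) = t := by rw [hAu]; exact dotProduct_comm _ _
    have huu : u ⬝ᵥ (A *ᵥ u) = c := by rw [hAu]; exact dotProduct_comm _ _
    rw [mulVec_sub, mulVec_smul, mulVec_smul, sub_dotProduct, smul_dotProduct,
      smul_dotProduct, dotProduct_sub, dotProduct_sub, dotProduct_smul, dotProduct_smul,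
      dotProduct_smul, dotProduct_smul, hux, hxu, huu] at h0
    simp only [smul_eq_mul] at h0
    nlinarith [h0, hc]
  constructor
  · refine posSemidef_iff_dotProduct_mulVec.mpr ⟨?_, ?_⟩
    · have h1 : ((1/c) • vecMulVec (1 : Fin M → ℝ) 1).IsHermitian := by
        ext i j; simp [vecMulVec, conjTranspose, mul_comm]
      exact hA.isHermitian.sub h1
    · intro x
      rw [star_trivial, sub_mulVec, smul_mulVec, dotProduct_sub, dotProduct_smul]
      have hvv : vecMulVec (1 : Fin M → ℝ) 1 *ᵥ x = ((1 : Fin M → ℝ) ⬝ᵥ x) • 1 := by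
        ext i; simp [vecMulVec, mulVec, dotProduct]
      rw [hvv]
      have := key x
      have h2 : x ⬝ᵥ (((1 : Fin M → ℝ) ⬝ᵥ x) • (1 : Fin M → ℝ)) = ((1:Fin M → ℝ) ⬝ᵥ x)^2 := by
        rw [dotProduct_smul, smul_eq_mul, dotProduct_comm]; ring
      rw [h2]
      have : (1 / c) * ((1:Fin M → ℝ) ⬝ᵥ x)^2 ≤ x ⬝ᵥ (A *ᵥ x) := by
        rw [div_mul_eq_mul_div, one_mul, div_le_iff₀ hc] at *
        nlinarith [key x]
      simp only [smul_eq_mul]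
      linarith
  · intro v hv
    have h := hv.dotProduct_mulVec_nonneg u
    rw [star_trivial, sub_mulVec, smul_mulVec, dotProduct_sub, dotProduct_smul] at h
    have hvv : vecMulVec (1 : Fin M → ℝ) 1 *ᵥ u = c • 1 := by
      ext i; simp [vecMulVec, mulVec, dotProduct, hc_def, mul_comm]
    rw [hvv, hAu] at h
    have huc : u ⬝ᵥ (1 : Fin M → ℝ) = c := dotProduct_comm _ _
    rw [dotProduct_smul, huc] at h
    simp only [smul_eq_mul] at h
    rw [le_div_iff₀ hc, ← sub_nonneg]
    nlinarith [h, hc]
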